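/- Let F be a standard discrete distribution on V = {0, ε, …, 1} with monopolist price x, values drawn i.i.d. from F, and let M be a revenue-maximizing moral mechanism (profit maximizer) with potential payment functions p_{-1},…,p_{-n}. Let v_{-i} ∈ V^{n−1} satisfy: max(v_{-i}) ≥ x; for every player j and every v̂_{-j} ≻ v_{-i}, p_{-j}(v̂_{-j}) ≥ max(v̂_{-j}); and p_{-i}(v_{-i}) < max(v_{-i}). Set v_i = p_{-i}(v_{-i}) and suppose that in the instance (v_i, v_{-i}) there exists some player j ≠ i with v_j ≥ p_{-j}(v_{-j}). Then the mechanism M' whose potential payment functions are identical to those of M except that p'_{-i}(v_{-i}) = p_{-i}(v_{-i}) + ε has expected revenue at least as large as M. -/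

import Mathlib

open scoped NNReal ENNReal
open Finset

/-- A moral mechanism, in its equivalent description as a profit maximizer: an individually
rational, payment independent single-item mechanism with no positive transfers, described by
its potential payment functions `pp i` (the payment of player `i` if he wins, given the
others' values; `⊤` if he can never win) together with an allocation rule that gives the item
to a player with maximal nonnegative potential profit `vᵢ − pp i v`, and allocates whenever
some player has strictly positive potential profit. -/
structure PM (n : ℕ) where
  pp : Fin n → (Fin n → ℝ≥0) → ℝ≥0∞
  alloc : (Fin n → ℝ≥0) → Option (Fin n)
  indep : ∀ (i : Fin n) (v : Fin n → ℝ≥0) (r : ℝ≥0),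
    pp i (Function.update v i r) = pp i v
  ir : ∀ (v : Fin n → ℝ≥0) (i : Fin n), alloc v = some i → pp i v ≤ (v i : ℝ≥0∞)
  maxProfit : ∀ (v : Fin n → ℝ≥0) (i : Fin n), alloc v = some i →
    ∀ j : Fin n, (v j : ℝ≥0∞) + pp i v ≤ (v i : ℝ≥0∞) + pp j v
  sells : ∀ v : Fin n → ℝ≥0, (∃ i, pp i v < (v i : ℝ≥0∞)) → alloc v ≠ none

namespace PM

variable {n : ℕ}

/-- The revenue of a profit maximizer in a given instance: the winner pays his potential
payment, and the revenue is `0` if the item is unallocated. -/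
noncomputable def rev (M : PM n) (v : Fin n → ℝ≥0) : ℝ :=
  match M.alloc v with
  | some i => (M.pp i v).toReal
  | none => 0

/-- Expected revenue when the `n` values are drawn i.i.d. from the discrete distribution
with pdf `g` on the grid `{0, ε, 2ε, …, mε}`. -/
noncomputable def expRev (m : ℕ) (ε : ℝ≥0) (g : ℕ → ℝ) (M : PM n) : ℝ :=
  ∑ k : Fin n → Fin (m + 1),
    (∏ i, g ((k i : ℕ))) * M.rev (fun i => ((k i : ℕ) : ℝ≥0) * ε)

/-- `M` maximizes expected revenue among all moral mechanisms (profit maximizers). -/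
def RevMax (m : ℕ) (ε : ℝ≥0) (g : ℕ → ℝ) (M : PM n) : Prop :=
  ∀ M' : PM n, expRev m ε g M' ≤ expRev m ε g M

/-- All coordinates of `v` belong to the grid `{0, ε, 2ε, …, mε}`. -/
def OnGrid (m : ℕ) (ε : ℝ≥0) (v : Fin n → ℝ≥0) : Prop :=
  ∀ i, ∃ k ≤ m, v i = (k : ℝ≥0) * ε

/-- `max(v₋ᵢ)` : the largest entry of `v` outside coordinate `i`. -/
noncomputable def maxOther (i : Fin n) (v : Fin n → ℝ≥0) : ℝ≥0 :=
  (Finset.univ.erase i).sup v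

/-- The entries of `v` outside coordinate `i`, sorted in decreasing order. -/
noncomputable def sortedDel (i : Fin n) (v : Fin n → ℝ≥0) : List ℝ≥0 :=
  List.insertionSort (· ≥ ·) ((List.ofFn v).eraseIdx (i : ℕ))

/-- `w₋ⱼ ≻ v₋ᵢ` : the decreasingly sorted entries of `w` outside `j` are lexicographically
greater than the decreasingly sorted entries of `v` outside `i`. -/
def SuccOrd (j : Fin n) (w : Fin n → ℝ≥0) (i : Fin n) (v : Fin n → ℝ≥0) : Prop :=
  List.Lex (· < ·) (sortedDel i v) (sortedDel j w)

/-- `x` is (the index of) the monopolist price of the distribution with pdf `g` on the grid: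
`x·ε` maximizes `p·(1 − F(p − ε))` over grid prices `p`. -/
def MonopolistIdx (m : ℕ) (ε : ℝ≥0) (g : ℕ → ℝ) (x : ℕ) : Prop :=
  x ≤ m ∧ ∀ k ≤ m,
    (k : ℝ) * (ε : ℝ) * (1 - ∑ j ∈ Finset.range k, g j) ≤
      (x : ℝ) * (ε : ℝ) * (1 - ∑ j ∈ Finset.range x, g j)

/-- The distribution with pdf `g` on the grid `{0, ε, …, mε}` is standard. -/
def StandardD (m : ℕ) (ε : ℝ≥0) (g : ℕ → ℝ) : Prop :=
  ∀ k k' : ℕ, k ≤ m → k' < k →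
    (k' : ℝ) * (ε : ℝ) - (ε : ℝ) * (1 - ∑ j ∈ Finset.range (k + 1), g j) / g k' ≤
      (k : ℝ) * (ε : ℝ) - (ε : ℝ) * (1 - ∑ j ∈ Finset.range (k + 1), g j) / g k

end PM

/-! ### Auxiliary list lemmas -/

namespace Stmt14Aux

lemma lex_orderedInsert_cons : ∀ (T : List ℝ≥0) (a x : ℝ≥0), a < x → (∀ t ∈ T, t ≤ x) →
    List.Pairwise (· ≥ ·) T →
    List.Lex (· < ·) (List.orderedInsert (· ≥ ·) a T) (x :: T)
  | [], a, x, hax, _, _ => List.Lex.rel hax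
  | y :: T', a, x, hax, hbd, hs => by
    by_cases hay : a ≥ y
    · rw [List.orderedInsert, if_pos hay]
      exact List.Lex.rel hax
    · rw [List.orderedInsert, if_neg hay]
      have hyx : y ≤ x := hbd y (by simp)
      rcases lt_or_eq_of_le hyx with h | h
      · exact List.Lex.rel h
      · subst h
        exact List.Lex.cons (lex_orderedInsert_cons T' a y (lt_of_not_ge hay)
          (fun t ht => (List.pairwise_cons.mp hs).1 t ht) (List.pairwise_cons.mp hs).2)

lemma lex_orderedInsert : ∀ (S : List ℝ≥0) (a b : ℝ≥0), a < b → List.Pairwise (· ≥ ·) S →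
    List.Lex (· < ·) (List.orderedInsert (· ≥ ·) a S) (List.orderedInsert (· ≥ ·) b S)
  | [], a, b, hab, _ => List.Lex.rel hab
  | x :: T, a, b, hab, hs => by
    simp only [List.orderedInsert]
    by_cases hbx : b ≥ x
    · rw [if_pos hbx]
      by_cases hax : a ≥ x
      · rw [if_pos hax]; exact List.Lex.rel hab
      · rw [if_neg hax]
        rcases lt_or_eq_of_le hbx with h | h
        · exact List.Lex.rel h
        · rw [← h]
          exact List.Lex.cons (lex_orderedInsert_cons T a x (lt_of_not_ge hax)
            (fun t ht => (List.pairwise_cons.mp hs).1 t ht) (List.pairwise_cons.mp hs).2)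
    · have hax : ¬ a ≥ x := fun h => hbx (le_trans h hab.le)
      rw [if_neg hax, if_neg hbx]
      exact List.Lex.cons (lex_orderedInsert T a b hab (List.pairwise_cons.mp hs).2)

lemma insertionSort_perm_eq {l l' : List ℝ≥0} (h : l.Perm l') :
    List.insertionSort (· ≥ ·) l = List.insertionSort (· ≥ ·) l' :=
  List.Perm.eq_of_pairwise (fun _ _ _ _ h1 h2 => le_antisymm h2 h1)
    (List.pairwise_insertionSort _ l) (List.pairwise_insertionSort _ l')
    (((List.perm_insertionSort _ l).trans h).trans (List.perm_insertionSort _ l').symm)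

lemma lex_sort_cons {L₁ L₂ : List ℝ≥0} (h : L₁.Perm L₂) {a b : ℝ≥0} (hab : a < b) :
    List.Lex (· < ·) (List.insertionSort (· ≥ ·) (a :: L₁))
      (List.insertionSort (· ≥ ·) (b :: L₂)) := by
  have e : List.insertionSort (· ≥ ·) L₁ = List.insertionSort (· ≥ ·) L₂ :=
    insertionSort_perm_eq h
  show List.Lex (· < ·) (List.orderedInsert (· ≥ ·) a (List.insertionSort (· ≥ ·) L₁)) _
  rw [e]
  exact lex_orderedInsert _ a b hab (List.pairwise_insertionSort _ L₂)

lemma perm_getElem_cons_eraseIdx {α : Type*} (l : List α) (k : ℕ) (h : k < l.length) :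
    l.Perm (l[k] :: l.eraseIdx k) := by
  conv_lhs => rw [← List.take_append_drop k l, List.drop_eq_getElem_cons h]
  rw [List.eraseIdx_eq_take_drop_succ]
  exact List.perm_middle

variable {n : ℕ}

lemma eraseIdx_ofFn_eq {v w : Fin n → ℝ≥0} {i : Fin n} (h : ∀ l, l ≠ i → w l = v l) :
    (List.ofFn w).eraseIdx (i : ℕ) = (List.ofFn v).eraseIdx (i : ℕ) := by
  apply List.ext_getElem
  · simp [List.length_eraseIdx]
  · intro k h1 h2
    rw [List.getElem_eraseIdx, List.getElem_eraseIdx]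
    split
    · next hk =>
        rw [List.getElem_ofFn, List.getElem_ofFn]
        refine h _ (fun he => ?_)
        have := congrArg Fin.val he
        simp at this
        omega
    · next hk =>
        rw [List.getElem_ofFn, List.getElem_ofFn]
        refine h _ (fun he => ?_)
        have := congrArg Fin.val he
        simp at this
        omega

lemma succOrd_of {b i : Fin n} (hbi : b ≠ i) {w v : Fin n → ℝ≥0}
    (hsp : ∀ l, l ≠ i → w l = v l) (hlt : v b < w i) : PM.SuccOrd b w i v := by
  classical
  set A : List ℝ≥0 := List.ofFn v with hA
  set B : List ℝ≥0 := List.ofFn w with hB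
  have hBlen : B.length = n := by simp [hB]
  have hiLen : (i : ℕ) < B.length := by rw [hBlen]; exact i.isLt
  have hbLen : (b : ℕ) < B.length := by rw [hBlen]; exact b.isLt
  have e1 : B[(i : ℕ)] = w i := by simp [hB]
  have e2 : B[(b : ℕ)] = v b := by
    have : B[(b : ℕ)] = w b := by simp [hB]
    rw [this, hsp b hbi]
  have eC : B.eraseIdx (i : ℕ) = A.eraseIdx (i : ℕ) := eraseIdx_ofFn_eq hsp
  have p1 : B.Perm (w i :: A.eraseIdx (i : ℕ)) := by
    have := perm_getElem_cons_eraseIdx B (i : ℕ) hiLen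
    rwa [e1, eC] at this
  have p2 : B.Perm (v b :: B.eraseIdx (b : ℕ)) := by
    have := perm_getElem_cons_eraseIdx B (b : ℕ) hbLen
    rwa [e2] at this
  have pmain : (w i :: A.eraseIdx (i : ℕ)).Perm (v b :: B.eraseIdx (b : ℕ)) :=
    p1.symm.trans p2
  -- pass to multisets
  have hms : (w i ::ₘ (A.eraseIdx (i : ℕ) : Multiset ℝ≥0)) =
      (v b ::ₘ (B.eraseIdx (b : ℕ) : Multiset ℝ≥0)) := by
    have := Multiset.coe_eq_coe.mpr pmain
    simpa using this
  have hvbmem : v b ∈ (A.eraseIdx (i : ℕ) : Multiset ℝ≥0) := by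
    have : v b ∈ (w i ::ₘ (A.eraseIdx (i : ℕ) : Multiset ℝ≥0)) := by
      rw [hms]; exact Multiset.mem_cons_self _ _
    rcases Multiset.mem_cons.mp this with h | h
    · exact absurd h hlt.ne
    · exact h
  set e : Multiset ℝ≥0 := ((A.eraseIdx (i : ℕ) : Multiset ℝ≥0)).erase (v b) with he
  have hC : (A.eraseIdx (i : ℕ) : Multiset ℝ≥0) = v b ::ₘ e :=
    (Multiset.cons_erase hvbmem).symm
  have hD : (B.eraseIdx (b : ℕ) : Multiset ℝ≥0) = w i ::ₘ e := by
    have : (v b ::ₘ w i ::ₘ e) = (v b ::ₘ (B.eraseIdx (b : ℕ) : Multiset ℝ≥0)) := by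
      rw [← hms, hC, Multiset.cons_swap]
    exact (Multiset.cons_inj_right _ ).mp this.symm
  have hLcoe : ∀ a : ℝ≥0, ((a :: e.toList : List ℝ≥0) : Multiset ℝ≥0) = a ::ₘ e := by
    intro a; rw [← Multiset.cons_coe, Multiset.coe_toList]
  have pC : (A.eraseIdx (i : ℕ)).Perm (v b :: e.toList) := by
    rw [← Multiset.coe_eq_coe, hLcoe]; exact hC
  have pD : (B.eraseIdx (b : ℕ)).Perm (w i :: e.toList) := by
    rw [← Multiset.coe_eq_coe, hLcoe]; exact hD
  unfold PM.SuccOrd PM.sortedDel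
  rw [← hA, ← hB, insertionSort_perm_eq pC, insertionSort_perm_eq pD]
  exact lex_sort_cons (List.Perm.refl _) hlt

/-! ### The modified mechanism -/

open scoped Classical in
noncomputable def spp (M : PM n) (i : Fin n) (v : Fin n → ℝ≥0) (t : ℝ≥0) :
    Fin n → (Fin n → ℝ≥0) → ℝ≥0∞ :=
  fun l w => if l = i ∧ (∀ l', l' ≠ i → w l' = v l') then (t : ℝ≥0∞) else M.pp l w

lemma spp_pos {M : PM n} {i : Fin n} {v : Fin n → ℝ≥0} {t : ℝ≥0} {w : Fin n → ℝ≥0}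
    (h : ∀ l', l' ≠ i → w l' = v l') : spp M i v t i w = (t : ℝ≥0∞) := by
  unfold spp; exact if_pos ⟨rfl, h⟩

lemma spp_neg {M : PM n} {i : Fin n} {v : Fin n → ℝ≥0} {t : ℝ≥0} {l : Fin n}
    {w : Fin n → ℝ≥0} (h : ¬(l = i ∧ ∀ l', l' ≠ i → w l' = v l')) :
    spp M i v t l w = M.pp l w := by
  unfold spp; exact if_neg h

lemma spp_ne {M : PM n} {i : Fin n} {v : Fin n → ℝ≥0} {t : ℝ≥0} {l : Fin n}
    {w : Fin n → ℝ≥0} (h : l ≠ i) : spp M i v t l w = M.pp l w :=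
  spp_neg (fun hc => h hc.1)

open scoped Classical in
noncomputable def gS (q : Fin n → (Fin n → ℝ≥0) → ℝ≥0∞) (w : Fin n → ℝ≥0) : Finset (Fin n) :=
  Finset.univ.filter (fun l => q l w ≤ (w l : ℝ≥0∞) ∧
    ∀ j, (w j : ℝ≥0∞) - q j w ≤ (w l : ℝ≥0∞) - q l w)

lemma mem_gS {q : Fin n → (Fin n → ℝ≥0) → ℝ≥0∞} {w : Fin n → ℝ≥0} {l : Fin n} :
    l ∈ gS q w ↔ (q l w ≤ (w l : ℝ≥0∞) ∧
      ∀ j, (w j : ℝ≥0∞) - q j w ≤ (w l : ℝ≥0∞) - q l w) := by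
  unfold gS; simp

noncomputable def gsel (q : Fin n → (Fin n → ℝ≥0) → ℝ≥0∞) (w : Fin n → ℝ≥0) :
    Option (Fin n) :=
  if h : (gS q w).Nonempty then
    some (Finset.exists_max_image (gS q w) (fun l => q l w) h).choose
  else none

lemma gsel_mem {q : Fin n → (Fin n → ℝ≥0) → ℝ≥0∞} {w : Fin n → ℝ≥0} {b : Fin n}
    (h : gsel q w = some b) : b ∈ gS q w ∧ ∀ l ∈ gS q w, q l w ≤ q b w := by
  unfold gsel at h
  split at h
  · next hne =>
      obtain ⟨hb1, hb2⟩ := (Finset.exists_max_image (gS q w) (fun l => q l w) hne).choose_spec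
      cases h
      exact ⟨hb1, hb2⟩
  · exact absurd h (by simp)

lemma gsel_some {q : Fin n → (Fin n → ℝ≥0) → ℝ≥0∞} {w : Fin n → ℝ≥0}
    (h : (gS q w).Nonempty) : ∃ b, gsel q w = some b := ⟨_, dif_pos h⟩

lemma gsel_none {q : Fin n → (Fin n → ℝ≥0) → ℝ≥0∞} {w : Fin n → ℝ≥0}
    (h : gsel q w = none) : ¬ (gS q w).Nonempty := by
  intro hne
  rw [gsel, dif_pos hne] at h
  exact absurd h (by simp)

/-- key subtraction lemma: profits compare from the `maxProfit` inequality -/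
lemma profit_le {a b pa pb : ℝ≥0∞} (hbtop : b ≠ ⊤) (h1 : pb ≤ b) (h2 : a + pb ≤ b + pa) :
    a - pa ≤ b - pb := by
  rw [tsub_le_iff_right]
  have h3 : a + pb ≤ ((b - pb) + pa) + pb := by
    rw [add_right_comm, tsub_add_cancel_of_le h1]; exact h2
  exact (WithTop.add_le_add_iff_right (ne_top_of_le_ne_top hbtop h1)).mp h3

/-- The modified mechanism: potential payments `spp M i v t`, greedy allocation. -/
noncomputable def NM (M : PM n) (i : Fin n) (v : Fin n → ℝ≥0) (t : ℝ≥0) : PM n where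
  pp := spp M i v t
  alloc := gsel (spp M i v t)
  indep := by
    intro l w r
    have hcond : (l = i ∧ ∀ l', l' ≠ i → Function.update w l r l' = v l') ↔
        (l = i ∧ ∀ l', l' ≠ i → w l' = v l') := by
      constructor
      · rintro ⟨rfl, h2⟩
        exact ⟨rfl, fun l' hl' => by rw [← h2 l' hl', Function.update_of_ne hl']⟩
      · rintro ⟨rfl, h2⟩
        exact ⟨rfl, fun l' hl' => by rw [Function.update_of_ne hl', h2 l' hl']⟩
    unfold spp
    rw [if_congr hcond rfl (M.indep l w r)]
  ir := by
    intro w b h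
    exact (mem_gS.mp (gsel_mem h).1).1
  maxProfit := by
    intro w b h j
    obtain ⟨hb1, hb2⟩ := mem_gS.mp (gsel_mem h).1
    calc (w j : ℝ≥0∞) + spp M i v t b w
        ≤ (((w j : ℝ≥0∞) - spp M i v t j w) + spp M i v t j w) + spp M i v t b w :=
          add_le_add_left le_tsub_add _
      _ ≤ (((w b : ℝ≥0∞) - spp M i v t b w) + spp M i v t j w) + spp M i v t b w :=
          add_le_add_left (add_le_add_left (hb2 j) _) _
      _ = (((w b : ℝ≥0∞) - spp M i v t b w) + spp M i v t b w) + spp M i v t j w := by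
          ring
      _ = (w b : ℝ≥0∞) + spp M i v t j w := by rw [tsub_add_cancel_of_le hb1]
  sells := by
    intro w ⟨l, hl⟩ hnone
    obtain ⟨b, -, hbmax⟩ := Finset.exists_max_image Finset.univ
      (fun j => (w j : ℝ≥0∞) - spp M i v t j w) ⟨l, Finset.mem_univ l⟩
    have hpos : (0 : ℝ≥0∞) < (w b : ℝ≥0∞) - spp M i v t b w :=
      lt_of_lt_of_le (tsub_pos_iff_lt.mpr hl) (hbmax l (Finset.mem_univ l))
    have hblt : spp M i v t b w < (w b : ℝ≥0∞) := tsub_pos_iff_lt.mp hpos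
    have hbmem : b ∈ gS (spp M i v t) w :=
      mem_gS.mpr ⟨hblt.le, fun j => hbmax j (Finset.mem_univ j)⟩
    rw [gsel, dif_pos ⟨b, hbmem⟩] at hnone
    exact absurd hnone (by simp)

lemma NM_pp (M : PM n) (i : Fin n) (v : Fin n → ℝ≥0) (t : ℝ≥0) :
    (NM M i v t).pp = spp M i v t := rfl

lemma NM_alloc (M : PM n) (i : Fin n) (v : Fin n → ℝ≥0) (t : ℝ≥0) :
    (NM M i v t).alloc = gsel (spp M i v t) := rfl

lemma rev_eq {N : PM n} {w : Fin n → ℝ≥0} {b : Fin n} (h : N.alloc w = some b) :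
    N.rev w = (N.pp b w).toReal := by
  unfold PM.rev; rw [h]

lemma rev_none {N : PM n} {w : Fin n → ℝ≥0} (h : N.alloc w = none) :
    N.rev w = 0 := by
  unfold PM.rev; rw [h]

lemma rev_nonneg (N : PM n) (w : Fin n → ℝ≥0) : 0 ≤ N.rev w := by
  unfold PM.rev
  match h : N.alloc w with
  | some b => exact ENNReal.toReal_nonneg
  | none => exact le_refl 0

/-! ### The per-instance revenue comparison -/

lemma rev_le {m : ℕ} {ε : ℝ≥0} {M : PM n} {i : Fin n} {v : Fin n → ℝ≥0}
    {vi : ℝ≥0} (hvi : M.pp i v = (vi : ℝ≥0∞))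
    (hprev : ∀ (j : Fin n) (w : Fin n → ℝ≥0), PM.OnGrid m ε w →
      PM.SuccOrd j w i v → (PM.maxOther j w : ℝ≥0∞) ≤ M.pp j w)
    (t : ℝ≥0) (ht : vi ≤ t) (w : Fin n → ℝ≥0) (hw : PM.OnGrid m ε w)
    (HB : (∀ l, l ≠ i → w l = v l) → M.alloc w = some i →
      (∀ l, ((w l : ℝ≥0∞)) < spp M i v t l w) → False) :
    M.rev w ≤ (NM M i v t).rev w := by
  cases hM : M.alloc w with
  | none => rw [rev_none hM]; exact rev_nonneg _ _
  | some l =>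
    have hil : M.pp l w ≤ (w l : ℝ≥0∞) := M.ir w l hM
    have hspp_ge : ∀ j', M.pp j' w ≤ spp M i v t j' w := by
      intro j'
      unfold spp
      split
      · next hc =>
          obtain ⟨rfl, hsp⟩ := hc
          have hwu : w = Function.update v j' (w j') := by
            funext l'
            by_cases h : l' = j'
            · subst h; simp
            · rw [Function.update_of_ne h]; exact hsp l' h
          rw [hwu, M.indep, hvi]
          exact ENNReal.coe_le_coe.mpr ht
      · exact le_refl _
    by_cases hcase : l = i ∧ ∀ l', l' ≠ i → w l' = v l'
    · -- M allocates to i on a "special" instance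
      obtain ⟨hli, hsp⟩ := hcase
      rw [hli] at hM hil
      have hwu : w = Function.update v i (w i) := by
        funext l'
        by_cases h : l' = i
        · subst h; simp
        · rw [Function.update_of_ne h]; exact hsp l' h
      have hpiw : M.pp i w = (vi : ℝ≥0∞) := by rw [hwu, M.indep, hvi]
      have hvile : (vi : ℝ≥0∞) ≤ (w i : ℝ≥0∞) := hpiw ▸ hil
      by_cases hne : (gS (spp M i v t) w).Nonempty
      · obtain ⟨b, hbsome⟩ := gsel_some hne
        obtain ⟨hbmem, -⟩ := gsel_mem hbsome
        obtain ⟨hb1, -⟩ := mem_gS.mp hbmem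
        have key : (vi : ℝ≥0∞) ≤ spp M i v t b w := by
          by_cases hbi : b = i
          · subst hbi
            rw [spp_pos hsp]
            exact ENNReal.coe_le_coe.mpr ht
          · have hsppb : spp M i v t b w = M.pp b w := spp_ne hbi
            rw [hsppb]
            have hwb : w b = v b := hsp b hbi
            have hvbc : w i ≤ v b := by
              by_contra hcon
              push_neg at hcon
              have hsucc : PM.SuccOrd b w i v := succOrd_of hbi hsp hcon
              have h1 := hprev b w hw hsucc
              have h2 : ((w i : ℝ≥0) : ℝ≥0∞) ≤ ((PM.maxOther b w : ℝ≥0) : ℝ≥0∞) := by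
                apply ENNReal.coe_le_coe.mpr
                exact Finset.le_sup (Finset.mem_erase.mpr ⟨Ne.symm hbi, Finset.mem_univ i⟩)
              have h3 : ((w i : ℝ≥0) : ℝ≥0∞) ≤ (v b : ℝ≥0∞) := by
                calc ((w i : ℝ≥0) : ℝ≥0∞) ≤ _ := h2
                  _ ≤ M.pp b w := h1
                  _ ≤ (w b : ℝ≥0∞) := by rw [hsppb] at hb1; exact hb1
                  _ = (v b : ℝ≥0∞) := by rw [hwb]
              exact absurd (ENNReal.coe_le_coe.mp h3) (not_le.mpr hcon)
            have hmp := M.maxProfit w i hM b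
            rw [hpiw, hwb] at hmp
            have hch : (w i : ℝ≥0∞) + (vi : ℝ≥0∞) ≤ (w i : ℝ≥0∞) + M.pp b w := by
              calc (w i : ℝ≥0∞) + (vi : ℝ≥0∞) ≤ (v b : ℝ≥0∞) + (vi : ℝ≥0∞) :=
                    add_le_add_left (ENNReal.coe_le_coe.mpr hvbc) _
                _ ≤ (w i : ℝ≥0∞) + M.pp b w := hmp
            exact (WithTop.add_le_add_iff_left (ENNReal.coe_ne_top)).mp hch
        rw [rev_eq hM, rev_eq hbsome, NM_pp, hpiw]
        apply ENNReal.toReal_mono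
        · exact ne_top_of_le_ne_top ENNReal.coe_ne_top hb1
        · exact key
      · exfalso
        refine HB hsp hM ?_
        have hzero : ∀ j', (w j' : ℝ≥0∞) - spp M i v t j' w = 0 := by
          obtain ⟨b, -, hbmax⟩ := Finset.exists_max_image Finset.univ
            (fun j' => (w j' : ℝ≥0∞) - spp M i v t j' w) ⟨i, Finset.mem_univ i⟩
          have hb0 : (w b : ℝ≥0∞) - spp M i v t b w = 0 := by
            by_contra h0
            have hpos : (0 : ℝ≥0∞) < (w b : ℝ≥0∞) - spp M i v t b w :=
              pos_iff_ne_zero.mpr h0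
            have hblt := tsub_pos_iff_lt.mp hpos
            exact hne ⟨b, mem_gS.mpr ⟨hblt.le, fun j' => hbmax j' (Finset.mem_univ j')⟩⟩
          intro j'
          exact le_antisymm (hb0 ▸ hbmax j' (Finset.mem_univ j')) zero_le
        intro l'
        by_contra hcon
        push_neg at hcon
        refine hne ⟨l', mem_gS.mpr ⟨hcon, fun j' => ?_⟩⟩
        rw [hzero j']
        exact zero_le
    · -- non-special winner: it stays feasible
      have hsppl : spp M i v t l w = M.pp l w := spp_neg hcase
      have hlmem : l ∈ gS (spp M i v t) w := by
        refine mem_gS.mpr ⟨by rw [hsppl]; exact hil, fun j' => ?_⟩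
        have h1 : (w j' : ℝ≥0∞) - spp M i v t j' w ≤ (w j' : ℝ≥0∞) - M.pp j' w :=
          tsub_le_tsub_left (hspp_ge j') _
        have h2 : (w j' : ℝ≥0∞) - M.pp j' w ≤ (w l : ℝ≥0∞) - M.pp l w :=
          profit_le ENNReal.coe_ne_top hil (M.maxProfit w l hM j')
        rw [hsppl]
        exact h1.trans h2
      obtain ⟨b, hbsome⟩ := gsel_some ⟨l, hlmem⟩
      obtain ⟨hbmem, hbmax⟩ := gsel_mem hbsome
      obtain ⟨hb1, -⟩ := mem_gS.mp hbmem
      rw [rev_eq hM, rev_eq hbsome, NM_pp]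
      apply ENNReal.toReal_mono
      · exact ne_top_of_le_ne_top ENNReal.coe_ne_top hb1
      · have := hbmax l hlmem
        rwa [hsppl] at this

lemma grid_sep {ε vi c c' : ℝ≥0} (hε : 0 < ε) {a b : ℕ} (hc : c = (a : ℝ≥0) * ε)
    (hc' : c' = (b : ℝ≥0) * ε) (h1 : vi ≤ c') (h2 : c' < c) (h3 : c < vi + ε) : False := by
  have hba : b < a := by
    by_contra h
    push_neg at h
    have : c ≤ c' := by
      rw [hc, hc']
      exact mul_le_mul_left (by exact_mod_cast h) ε
    exact absurd h2 (not_lt.mpr this)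
  have hstep : c' + ε ≤ c := by
    rw [hc, hc']
    have h4 : ((b : ℝ≥0) + 1) * ε ≤ (a : ℝ≥0) * ε :=
      mul_le_mul_left (by exact_mod_cast Nat.succ_le_of_lt hba) ε
    calc (b : ℝ≥0) * ε + ε = ((b : ℝ≥0) + 1) * ε := by ring
      _ ≤ _ := h4
  have h5 : c' + ε < vi + ε := lt_of_le_of_lt hstep h3
  have h6 : c' < vi := lt_of_add_lt_add_right h5
  exact absurd h1 (not_le.mpr h6)

end Stmt14Aux

open Stmt14Aux

theorem stmt14 (n m : ℕ) (hm : 0 < m) (ε : ℝ≥0) (hε : (ε : ℝ) = 1 / m)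
    (g : ℕ → ℝ) (hgpos : ∀ k ≤ m, 0 < g k)
    (hgsum : ∑ k ∈ Finset.range (m + 1), g k = 1)
    (hstd : PM.StandardD m ε g)
    (x : ℕ) (hx : PM.MonopolistIdx m ε g x)
    (M : PM n) (hMmax : PM.RevMax m ε g M)
    (i : Fin n) (v : Fin n → ℝ≥0) (hv : PM.OnGrid m ε v)
    (hvx : (x : ℝ≥0) * ε ≤ PM.maxOther i v)
    (hprev : ∀ (j : Fin n) (w : Fin n → ℝ≥0), PM.OnGrid m ε w →
      PM.SuccOrd j w i v → (PM.maxOther j w : ℝ≥0∞) ≤ M.pp j w)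
    (hlt : M.pp i v < (PM.maxOther i v : ℝ≥0∞))
    (vi : ℝ≥0) (hvi : M.pp i v = (vi : ℝ≥0∞))
    (j : Fin n) (hji : j ≠ i)
    (hjprof : M.pp j (Function.update v i vi) ≤ (v j : ℝ≥0∞)) :
    ∃ M' : PM n,
      (∀ (l : Fin n) (w : Fin n → ℝ≥0), l ≠ i → M'.pp l w = M.pp l w) ∧
      (∀ w : Fin n → ℝ≥0,
        ((∀ l, l ≠ i → w l = v l) → M'.pp i w = M.pp i v + (ε : ℝ≥0∞)) ∧
        ((¬ ∀ l, l ≠ i → w l = v l) → M'.pp i w = M.pp i w)) ∧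
      PM.expRev m ε g M ≤ PM.expRev m ε g M' := by
  have hεpos : 0 < ε := by
    have h0 : (0 : ℝ) < (ε : ℝ) := by
      rw [hε]
      positivity
    exact_mod_cast h0
  refine ⟨NM M i v (vi + ε), ?_, ?_, ?_⟩
  · intro l w hl
    rw [NM_pp]
    exact spp_ne hl
  · intro w
    constructor
    · intro hsp
      rw [NM_pp, spp_pos hsp, hvi, ENNReal.coe_add]
    · intro hnsp
      rw [NM_pp]
      exact spp_neg (fun hc => hnsp hc.2)
  · unfold PM.expRev
    apply Finset.sum_le_sum
    intro k _
    have hwpos : ∀ k' : Fin n → Fin (m + 1), 0 < ∏ l, g ((k' l : ℕ)) :=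
      fun k' => Finset.prod_pos (fun l _ => hgpos _ (Nat.lt_succ_iff.mp (k' l).isLt))
    apply mul_le_mul_of_nonneg_left _ (hwpos k).le
    set w : Fin n → ℝ≥0 := fun l => ((k l : ℕ) : ℝ≥0) * ε with hwdef
    have hwgrid : PM.OnGrid m ε w :=
      fun l => ⟨(k l : ℕ), Nat.lt_succ_iff.mp (k l).isLt, rfl⟩
    apply rev_le hvi hprev (vi + ε) le_self_add w hwgrid
    intro hsp hMw hall
    have hwu : w = Function.update v i (w i) := by
      funext l'
      by_cases h : l' = i
      · subst h; simp
      · rw [Function.update_of_ne h]; exact hsp l' h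
    have hpiw : M.pp i w = (vi : ℝ≥0∞) := by rw [hwu, M.indep, hvi]
    have hvile : vi ≤ w i := by
      have h0 := M.ir w i hMw
      rw [hpiw] at h0
      exact ENNReal.coe_le_coe.mp h0
    have hwilt : w i < vi + ε := by
      have h0 := hall i
      rw [spp_pos hsp] at h0
      exact ENNReal.coe_lt_coe.mp h0
    rcases eq_or_lt_of_le hvile with heq | hlt'
    · -- boundary grid point equals vi : contradict hjprof
      have hweq : w = Function.update v i vi := by
        rw [heq]
        exact hwu
      have hupp : M.pp j (Function.update v i vi) = M.pp j w := by rw [← hweq]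
      have hj := hall j
      rw [spp_ne hji] at hj
      rw [hsp j hji] at hj
      rw [← hupp] at hj
      exact absurd hjprof (not_le.mpr hj)
    · -- vi < w i : the mechanism with price (w i) would strictly improve on M
      set c : ℝ≥0 := w i with hcdef
      have hgood : ∀ k' : Fin n → Fin (m + 1),
          M.rev (fun l => ((k' l : ℕ) : ℝ≥0) * ε) ≤
            (NM M i v c).rev (fun l => ((k' l : ℕ) : ℝ≥0) * ε) := by
        intro k'
        set w' : Fin n → ℝ≥0 := fun l => ((k' l : ℕ) : ℝ≥0) * ε with hw'def
        have hw'grid : PM.OnGrid m ε w' :=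
          fun l => ⟨(k' l : ℕ), Nat.lt_succ_iff.mp (k' l).isLt, rfl⟩
        apply rev_le hvi hprev c hlt'.le w' hw'grid
        intro hsp' hMw' hall'
        have hwu' : w' = Function.update v i (w' i) := by
          funext l'
          by_cases h : l' = i
          · subst h; simp
          · rw [Function.update_of_ne h]; exact hsp' l' h
        have hpiw' : M.pp i w' = (vi : ℝ≥0∞) := by rw [hwu', M.indep, hvi]
        have h1 : vi ≤ w' i := by
          have h0 := M.ir w' i hMw'
          rw [hpiw'] at h0
          exact ENNReal.coe_le_coe.mp h0
        have h2 : w' i < c := by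
          have h0 := hall' i
          rw [spp_pos hsp'] at h0
          exact ENNReal.coe_lt_coe.mp h0
        exact grid_sep hεpos (a := (k i : ℕ)) (b := (k' i : ℕ))
          (by rw [hcdef, hwdef]) (by rw [hw'def]) h1 h2 hwilt
      have hstrict : M.rev w < (NM M i v c).rev w := by
        have hrevM : M.rev w = ((vi : ℝ≥0∞)).toReal := by rw [rev_eq hMw, hpiw]
        have hsppi : spp M i v c i w = (c : ℝ≥0∞) := spp_pos hsp
        have himem : i ∈ gS (spp M i v c) w := by
          refine mem_gS.mpr ⟨by rw [hsppi, hcdef], fun j' => ?_⟩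
          have hz : (w j' : ℝ≥0∞) - spp M i v c j' w = 0 := by
            by_cases hj'i : j' = i
            · subst hj'i
              rw [hsppi]
              exact tsub_eq_zero_of_le (by rw [hcdef])
            · have h0 := hall j'
              rw [spp_ne hj'i] at h0
              rw [spp_ne hj'i]
              exact tsub_eq_zero_of_le h0.le
          rw [hz]
          exact zero_le
        obtain ⟨b, hbsome⟩ := gsel_some ⟨i, himem⟩
        obtain ⟨hbmem, hbmax⟩ := gsel_mem hbsome
        have hbsome' : (NM M i v c).alloc w = some b := hbsome
        rw [rev_eq hbsome', NM_pp, hrevM]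
        have h1 : (c : ℝ≥0∞) ≤ spp M i v c b w := by
          have h0 := hbmax i himem
          rwa [hsppi] at h0
        have h2 : spp M i v c b w ≠ ⊤ :=
          ne_top_of_le_ne_top ENNReal.coe_ne_top (mem_gS.mp hbmem).1
        calc ((vi : ℝ≥0∞)).toReal < ((c : ℝ≥0∞)).toReal := by
              rw [ENNReal.coe_toReal, ENNReal.coe_toReal]
              exact_mod_cast hlt'
          _ ≤ _ := ENNReal.toReal_mono h2 h1
      have hexp : PM.expRev m ε g M < PM.expRev m ε g (NM M i v c) := by
        unfold PM.expRev
        apply Finset.sum_lt_sum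
        · intro k' _
          exact mul_le_mul_of_nonneg_left (hgood k') (hwpos k').le
        · exact ⟨k, Finset.mem_univ k, mul_lt_mul_of_pos_left hstrict (hwpos k)⟩
      exact absurd (hMmax (NM M i v c)) (not_le.mpr hexp)
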